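/- If δ is a joint strategy (a probability distribution over pure strategy profiles) and δ' = (ρ'_i, δ_{-i}) is the product joint strategy where player i plays a fixed pure strategy ρ'_i while the other players play according to the marginal δ_{-i} of δ, then the total correlation of δ' is at most the total correlation of δ, i.e. I(δ') ≤ I(δ). -/

import Mathlib

open Finset

/-- Marginal distribution of a joint strategy `δ` for player `i`. -/
noncomputable def marg {N : Type} [Fintype N] [DecidableEq N]
    {P : N → Type} [∀ i, Fintype (P i)] [∀ i, DecidableEq (P i)]
    (δ : (∀ j, P j) → ℝ) (i : N) (a : P i) : ℝ :=
  ∑ ρ : ∀ j, P j, if ρ i = a then δ ρ else 0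

/-- Product of the marginals of a joint strategy `δ`. -/
noncomputable def prodMarg {N : Type} [Fintype N] [DecidableEq N]
    {P : N → Type} [∀ i, Fintype (P i)] [∀ i, DecidableEq (P i)]
    (δ : (∀ j, P j) → ℝ) (ρ : ∀ j, P j) : ℝ :=
  ∏ i, marg δ i (ρ i)

/-- Kullback–Leibler divergence between finitely supported distributions. -/
noncomputable def KL {X : Type} [Fintype X] (p q : X → ℝ) : ℝ :=
  ∑ x, p x * Real.log (p x / q x)

section Aux
set_option linter.unusedSectionVars false
variable {N : Type} [Fintype N] [DecidableEq N]
    {P : N → Type} [∀ i, Fintype (P i)] [∀ i, DecidableEq (P i)] (i : N)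

lemma mySymm_apply_same (a : P i) (σ : ∀ j : {j // j ≠ i}, P j) :
    (Equiv.piSplitAt i P).symm (a, σ) i = a := by
  simp [Equiv.piSplitAt]

lemma myUpdate_symm (a a' : P i) (σ : ∀ j : {j // j ≠ i}, P j) :
    Function.update ((Equiv.piSplitAt i P).symm (a, σ)) i a' =
      (Equiv.piSplitAt i P).symm (a', σ) := by
  funext j
  by_cases h : j = i
  · subst h; simp [Equiv.piSplitAt]
  · simp [Function.update_of_ne h, Equiv.piSplitAt, h]

lemma mySum_split (h : (∀ j, P j) → ℝ) :
    ∑ ρ, h ρ = ∑ a : P i, ∑ σ : ∀ j : {j // j ≠ i}, P j,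
      h ((Equiv.piSplitAt i P).symm (a, σ)) := by
  rw [← Equiv.sum_comp (Equiv.piSplitAt i P).symm h, Fintype.sum_prod_type]

lemma myGroup (ρ' : P i) (g : (∀ j, P j) → ℝ) :
    ∑ ρ, (if ρ i = ρ' then ∑ a, g (Function.update ρ i a) else 0) = ∑ ρ, g ρ := by
  rw [mySum_split i (fun ρ => if ρ i = ρ' then ∑ a, g (Function.update ρ i a) else 0),
    mySum_split i g]
  simp only [mySymm_apply_same, myUpdate_symm]
  conv_rhs => rw [Finset.sum_comm]
  conv_lhs => rw [Finset.sum_comm]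
  refine Finset.sum_congr rfl fun σ _ => ?_
  simp

/-- marginal of δ onto coordinates other than i, as a function of all profiles. -/
noncomputable def sAux (δ : (∀ j, P j) → ℝ) (ρ : ∀ j, P j) : ℝ :=
  ∑ a, δ (Function.update ρ i a)

/-- product of marginals over coordinates other than i. -/
noncomputable def gAux (δ : (∀ j, P j) → ℝ) (ρ : ∀ j, P j) : ℝ :=
  ∏ j ∈ univ.erase i, marg δ j (ρ j)

lemma sAux_update (δ : (∀ j, P j) → ℝ) (ρ : ∀ j, P j) (a : P i) :
    sAux i δ (Function.update ρ i a) = sAux i δ ρ := by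
  unfold sAux
  refine Finset.sum_congr rfl fun a' _ => ?_
  rw [Function.update_idem]

lemma gAux_update (δ : (∀ j, P j) → ℝ) (ρ : ∀ j, P j) (a : P i) :
    gAux i δ (Function.update ρ i a) = gAux i δ ρ := by
  unfold gAux
  refine Finset.prod_congr rfl fun j hj => ?_
  rw [Function.update_of_ne (Finset.mem_erase.mp hj).1]

end Aux

set_option maxHeartbeats 1000000 in
/-- If `δ'` is the product joint strategy in which player `i` plays the fixed pure
strategy `ρ'` and the others play according to the marginal `δ_{-i}` of `δ`, then the
total correlation of `δ'` is at most the total correlation of `δ`. -/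
theorem product_deviation_total_correlation_le
    {N : Type} [Fintype N] [DecidableEq N]
    {P : N → Type} [∀ i, Fintype (P i)] [∀ i, DecidableEq (P i)]
    (δ : (∀ j, P j) → ℝ) (hpos : ∀ ρ, 0 ≤ δ ρ) (hsum : ∑ ρ, δ ρ = 1)
    (i : N) (ρ' : P i)
    (δ' : (∀ j, P j) → ℝ)
    (hδ' : ∀ ρ, δ' ρ =
      if ρ i = ρ' then ∑ a : P i, δ (Function.update ρ i a) else 0) :
    KL δ' (prodMarg δ') ≤ KL δ (prodMarg δ) := by
  -- basic positivity facts
  have hδle_marg : ∀ (ρ : ∀ j, P j) (j : N), δ ρ ≤ marg δ j (ρ j) := by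
    intro ρ j
    have := Finset.single_le_sum (f := fun σ => if σ j = ρ j then δ σ else 0)
      (fun σ _ => by split; exacts [hpos σ, le_rfl]) (Finset.mem_univ ρ)
    simpa [marg] using this
  have hδle_s : ∀ ρ : ∀ j, P j, δ ρ ≤ sAux i δ ρ := by
    intro ρ
    have := Finset.single_le_sum (f := fun a => δ (Function.update ρ i a))
      (fun a _ => hpos _) (Finset.mem_univ (ρ i))
    simpa [sAux, Function.update_eq_self] using this
  have hmarg_nonneg : ∀ (j : N) (b : P j), 0 ≤ marg δ j b := by
    intro j b
    unfold marg
    exact Finset.sum_nonneg fun σ _ => by split; exacts [hpos σ, le_rfl]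
  have hs_nonneg : ∀ ρ : ∀ j, P j, 0 ≤ sAux i δ ρ :=
    fun ρ => Finset.sum_nonneg fun a _ => hpos _
  -- sum of δ' is 1
  have hsum' : ∑ ρ, δ' ρ = 1 := by
    calc ∑ ρ, δ' ρ
        = ∑ ρ, (if ρ i = ρ' then ∑ a, δ (Function.update ρ i a) else 0) :=
          Finset.sum_congr rfl fun ρ _ => hδ' ρ
      _ = ∑ ρ, δ ρ := myGroup i ρ' δ
      _ = 1 := hsum
  -- marginals of δ'
  have hmargδ'_i : ∀ b : P i, marg δ' i b = if b = ρ' then 1 else 0 := by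
    intro b
    by_cases hb : b = ρ'
    · subst hb
      rw [if_pos rfl, ← hsum']
      refine Finset.sum_congr rfl fun ρ _ => ?_
      by_cases h : ρ i = b
      · rw [if_pos h]
      · rw [if_neg h, hδ' ρ, if_neg h]
    · rw [if_neg hb]
      refine Finset.sum_eq_zero fun ρ _ => ?_
      by_cases h : ρ i = b
      · rw [if_pos h, hδ' ρ, if_neg (h ▸ hb)]
      · rw [if_neg h]
  have hmargδ'_ne : ∀ j : N, j ≠ i → ∀ b : P j, marg δ' j b = marg δ j b := by
    intro j hj b
    have key : ∀ ρ : ∀ j, P j, (if ρ j = b then δ' ρ else 0) =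
        (if ρ i = ρ' then ∑ a, (if (Function.update ρ i a) j = b
          then δ (Function.update ρ i a) else 0) else 0) := by
      intro ρ
      have hupd : ∀ a : P i, (Function.update ρ i a) j = ρ j :=
        fun a => Function.update_of_ne hj _ _
      simp only [hδ' ρ, hupd]
      by_cases h2 : ρ j = b <;> by_cases h1 : ρ i = ρ' <;> simp [h1, h2]
    calc marg δ' j b
        = ∑ ρ, (if ρ i = ρ' then ∑ a, (if (Function.update ρ i a) j = b
            then δ (Function.update ρ i a) else 0) else 0) :=
          Finset.sum_congr rfl fun ρ _ => key ρ
      _ = ∑ ρ, (if ρ j = b then δ ρ else 0) :=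
          myGroup i ρ' (fun σ => if σ j = b then δ σ else 0)
      _ = marg δ j b := rfl
  -- product-of-marginals formulas
  have hprodδ : ∀ ρ : ∀ j, P j, prodMarg δ ρ = marg δ i (ρ i) * gAux i δ ρ := by
    intro ρ
    rw [prodMarg, ← Finset.mul_prod_erase univ _ (Finset.mem_univ i)]
    rfl
  have hprodδ' : ∀ ρ : ∀ j, P j,
      prodMarg δ' ρ = if ρ i = ρ' then gAux i δ ρ else 0 := by
    intro ρ
    rw [prodMarg, ← Finset.mul_prod_erase univ _ (Finset.mem_univ i), hmargδ'_i]
    have : ∏ j ∈ univ.erase i, marg δ' j (ρ j) = gAux i δ ρ :=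
      Finset.prod_congr rfl fun j hj => hmargδ'_ne j (Finset.mem_erase.mp hj).1 _
    rw [this]
    split_ifs <;> simp
  -- KL of δ' rewritten as a sum weighted by δ
  have hKL' : KL δ' (prodMarg δ') = ∑ ρ, δ ρ * Real.log (sAux i δ ρ / gAux i δ ρ) := by
    calc KL δ' (prodMarg δ')
        = ∑ ρ, (if ρ i = ρ' then ∑ a,
            (fun σ => δ σ * Real.log (sAux i δ σ / gAux i δ σ)) (Function.update ρ i a)
            else 0) := by
          refine Finset.sum_congr rfl fun ρ _ => ?_
          by_cases h : ρ i = ρ'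
          · rw [if_pos h, hδ' ρ, hprodδ' ρ, if_pos h, if_pos h]
            simp only [sAux_update, gAux_update]
            rw [← Finset.sum_mul]
            rfl
          · rw [if_neg h, hδ' ρ, if_neg h, zero_mul]
      _ = ∑ ρ, δ ρ * Real.log (sAux i δ ρ / gAux i δ ρ) :=
          myGroup i ρ' (fun σ => δ σ * Real.log (sAux i δ σ / gAux i δ σ))
  -- the difference is a relative entropy
  have hdiff : KL δ (prodMarg δ) - KL δ' (prodMarg δ') =
      ∑ ρ, δ ρ * Real.log (δ ρ / (marg δ i (ρ i) * sAux i δ ρ)) := by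
    rw [hKL', KL, ← Finset.sum_sub_distrib]
    refine Finset.sum_congr rfl fun ρ _ => ?_
    rcases eq_or_lt_of_le (hpos ρ) with h0 | h0
    · simp [← h0]
    · have hm : ∀ j : N, 0 < marg δ j (ρ j) :=
        fun j => lt_of_lt_of_le h0 (hδle_marg ρ j)
      have hsρ : 0 < sAux i δ ρ := lt_of_lt_of_le h0 (hδle_s ρ)
      have hgρ : 0 < gAux i δ ρ := Finset.prod_pos fun j _ => hm j
      rw [hprodδ ρ, Real.log_div (ne_of_gt h0) (ne_of_gt (mul_pos (hm i) hgρ)),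
        Real.log_div (ne_of_gt hsρ) (ne_of_gt hgρ),
        Real.log_div (ne_of_gt h0) (ne_of_gt (mul_pos (hm i) hsρ)),
        Real.log_mul (ne_of_gt (hm i)) (ne_of_gt hgρ),
        Real.log_mul (ne_of_gt (hm i)) (ne_of_gt hsρ)]
      ring
  -- the reference distribution q sums to 1
  have hqsum : ∑ ρ, marg δ i (ρ i) * sAux i δ ρ = 1 := by
    rw [mySum_split i (fun ρ => marg δ i (ρ i) * sAux i δ ρ)]
    have key : ∀ (a : P i) (σ : ∀ j : {j // j ≠ i}, P j),
        marg δ i (((Equiv.piSplitAt i P).symm (a, σ)) i) *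
          sAux i δ ((Equiv.piSplitAt i P).symm (a, σ)) =
        marg δ i a * ∑ a' : P i, δ ((Equiv.piSplitAt i P).symm (a', σ)) := by
      intro a σ
      rw [mySymm_apply_same]
      congr 1
      unfold sAux
      exact Finset.sum_congr rfl fun a' _ => by rw [myUpdate_symm]
    simp only [key]
    rw [← Finset.sum_mul_sum]
    have h1 : ∑ a : P i, marg δ i a = 1 := by
      unfold marg
      rw [Finset.sum_comm]
      simpa using hsum
    have h2 : ∑ σ : ∀ j : {j // j ≠ i}, P j,
        ∑ a' : P i, δ ((Equiv.piSplitAt i P).symm (a', σ)) = 1 := by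
      rw [Finset.sum_comm, ← mySum_split i δ]
      exact hsum
    rw [h1, h2, one_mul]
  -- Gibbs inequality
  have hgibbs : 0 ≤ ∑ ρ, δ ρ * Real.log (δ ρ / (marg δ i (ρ i) * sAux i δ ρ)) := by
    have key : ∀ ρ : ∀ j, P j,
        δ ρ - marg δ i (ρ i) * sAux i δ ρ ≤
          δ ρ * Real.log (δ ρ / (marg δ i (ρ i) * sAux i δ ρ)) := by
      intro ρ
      set q := marg δ i (ρ i) * sAux i δ ρ with hq
      rcases eq_or_lt_of_le (hpos ρ) with h0 | h0
      · rw [← h0, zero_mul, zero_sub]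
        simp only [neg_nonpos]
        exact mul_nonneg (hmarg_nonneg i (ρ i)) (hs_nonneg ρ)
      · have hqpos : 0 < q :=
          mul_pos (lt_of_lt_of_le h0 (hδle_marg ρ i)) (lt_of_lt_of_le h0 (hδle_s ρ))
        have h1 : Real.log (q / δ ρ) ≤ q / δ ρ - 1 :=
          Real.log_le_sub_one_of_pos (by positivity)
        have h2 : Real.log (δ ρ / q) = - Real.log (q / δ ρ) := by
          rw [← Real.log_inv, inv_div]
        have h3 : δ ρ * (q / δ ρ - 1) = q - δ ρ := by field_simp
        rw [h2]
        nlinarith [mul_le_mul_of_nonneg_left h1 (le_of_lt h0)]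
    calc (0 : ℝ) = ∑ ρ, (δ ρ - marg δ i (ρ i) * sAux i δ ρ) := by
          rw [Finset.sum_sub_distrib, hsum, hqsum, sub_self]
      _ ≤ _ := Finset.sum_le_sum fun ρ _ => key ρ
  linarith [hdiff, hgibbs]
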